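/- Let a, a′ : ℕ → ℝ and b : ℕ → ℝ be sequences of positive numbers with s := ∑_{k=0}^∞ 1/a(k) < ∞ and t := ∑_{i=0}^∞ a′(i)/b(i)² < ∞, and let c : ℕ → ℝ and κ > 0 satisfy κ ≤ ∏_{j=M}^{N} c(j) ≤ 1/κ for all natural numbers M ≤ N. Then the linear map T₃ sending g to the sequence k ↦ ∑_{i=0}^{k} (1/b(i))·(∏_{j=i}^{k−1} c(j))·g(i) defines a bounded linear operator from ℓ²_{a′} to ℓ²_a with operator norm at most √(s·t)/κ, and T₃ is a compact operator. -/

import Mathlib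

open MeasureTheory Finset

/-- The weighted sequence space `ℓ²_a` realized as `L²` of the counting measure on
`ℕ` with density `1/a`. -/
noncomputable def wSeqMeasure (a : ℕ → ℝ) : Measure ℕ :=
  Measure.count.withDensity fun k => ENNReal.ofReal (1 / a k)

open scoped ENNReal NNReal

section Aux
lemma wseq_lintegral (a : ℕ → ℝ) (f : ℕ → ℝ≥0∞) :
    ∫⁻ k, f k ∂(wSeqMeasure a) = ∑' k, ENNReal.ofReal (1 / a k) * f k := by
  rw [wSeqMeasure, lintegral_withDensity_eq_lintegral_mul _ (measurable_of_countable _)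
    (measurable_of_countable _), lintegral_count]
  rfl

lemma wseq_eLpNorm (a : ℕ → ℝ) (ha : ∀ k, 0 < a k) (f : ℕ → ℂ) :
    eLpNorm f 2 (wSeqMeasure a)
      = (∑' k, ENNReal.ofReal (‖f k‖^2 / a k)) ^ (1/2 : ℝ) := by
  rw [eLpNorm_eq_lintegral_rpow_enorm_toReal (by norm_num) (by norm_num), wseq_lintegral]
  simp only [ENNReal.toReal_ofNat]
  congr 1
  apply tsum_congr
  intro k
  rw [← ofReal_norm, ENNReal.ofReal_rpow_of_nonneg (norm_nonneg _) (by norm_num),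
    ← ENNReal.ofReal_mul (one_div_nonneg.2 (ha k).le)]
  congr 1
  rw [show ((2:ℝ)) = ((2:ℕ):ℝ) by norm_num, Real.rpow_natCast]
  ring

lemma wseq_eLpNorm_of_summable (a : ℕ → ℝ) (ha : ∀ k, 0 < a k) (f : ℕ → ℂ)
    (h : Summable fun k => ‖f k‖^2 / a k) :
    eLpNorm f 2 (wSeqMeasure a)
      = ENNReal.ofReal (∑' k, ‖f k‖^2 / a k) ^ (1/2 : ℝ) := by
  rw [wseq_eLpNorm a ha,
    ENNReal.ofReal_tsum_of_nonneg (fun k => div_nonneg (sq_nonneg _) (ha k).le) h]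

lemma wseq_memℒp (a : ℕ → ℝ) (ha : ∀ k, 0 < a k) (f : ℕ → ℂ)
    (h : Summable fun k => ‖f k‖^2 / a k) :
    MemLp f 2 (wSeqMeasure a) := by
  refine ⟨(measurable_of_countable f).aestronglyMeasurable, ?_⟩
  rw [wseq_eLpNorm_of_summable a ha f h]
  exact ENNReal.rpow_lt_top_of_nonneg (by norm_num) ENNReal.ofReal_ne_top

lemma wseq_norm_toLp (a : ℕ → ℝ) (ha : ∀ k, 0 < a k) (f : ℕ → ℂ)
    (h : Summable fun k => ‖f k‖^2 / a k) :
    ‖(wseq_memℒp a ha f h).toLp f‖ = Real.sqrt (∑' k, ‖f k‖^2 / a k) := by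
  rw [Lp.norm_toLp, wseq_eLpNorm_of_summable a ha f h, ← ENNReal.toReal_rpow,
    ENNReal.toReal_ofReal (tsum_nonneg fun k => div_nonneg (sq_nonneg _) (ha k).le),
    Real.sqrt_eq_rpow]

lemma wseq_summable (a : ℕ → ℝ) (ha : ∀ k, 0 < a k) (g : Lp ℂ 2 (wSeqMeasure a)) :
    Summable fun k => ‖g k‖^2 / a k := by
  have hfin := (Lp.memLp g).2
  rw [wseq_eLpNorm a ha] at hfin
  have hne : (∑' k, ENNReal.ofReal (‖(g : ℕ → ℂ) k‖^2 / a k)) ≠ ⊤ := by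
    intro hh
    rw [hh, ENNReal.top_rpow_of_pos (by norm_num)] at hfin
    exact absurd hfin (lt_irrefl _)
  simp only [ENNReal.ofReal] at hne
  have hsum := ENNReal.tsum_coe_ne_top_iff_summable.mp hne
  exact (NNReal.summable_coe.mpr hsum).congr fun k =>
    Real.coe_toNNReal _ (div_nonneg (sq_nonneg _) (ha k).le)

lemma wseq_norm_eq (a : ℕ → ℝ) (ha : ∀ k, 0 < a k) (g : Lp ℂ 2 (wSeqMeasure a)) :
    ∑' k, ‖g k‖^2 / a k = ‖g‖^2 := by
  have h := wseq_summable a ha g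
  rw [Lp.norm_def, wseq_eLpNorm_of_summable a ha _ h, ← ENNReal.toReal_rpow,
    ENNReal.toReal_ofReal (tsum_nonneg fun k => div_nonneg (sq_nonneg _) (ha k).le),
    ← Real.rpow_natCast _ 2, ← Real.rpow_mul (tsum_nonneg fun k => div_nonneg (sq_nonneg _) (ha k).le)]
  norm_num

lemma wseq_singleton (a : ℕ → ℝ) (k : ℕ) :
    wSeqMeasure a {k} = ENNReal.ofReal (1 / a k) := by
  rw [wSeqMeasure, withDensity_apply _ (measurableSet_singleton k), lintegral_singleton]
  simp [Measure.count_singleton]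

lemma wseq_ae {a : ℕ → ℝ} (ha : ∀ k, 0 < a k) {P : ℕ → Prop}
    (h : ∀ᵐ k ∂(wSeqMeasure a), P k) : ∀ k, P k := by
  intro k
  by_contra hk
  have h0 : wSeqMeasure a {x | ¬ P x} = 0 := h
  have h1 : wSeqMeasure a {k} ≤ 0 := by
    rw [← h0]; exact measure_mono (by simpa using hk)
  rw [wseq_singleton] at h1
  have : (0:ℝ) < 1 / a k := by
    have := ha k; positivity
  exact absurd (le_antisymm h1 zero_le) (ENNReal.ofReal_pos.2 this).ne'


noncomputable def T3fun (b c : ℕ → ℝ) (g : ℕ → ℂ) (k : ℕ) : ℂ :=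
  ∑ i ∈ Finset.range (k+1), (1 / (b i : ℂ)) * (∏ j ∈ Finset.Ico i k, (c j : ℂ)) * g i

lemma kappa_le_one {c : ℕ → ℝ} {κ : ℝ} (hκ : 0 < κ)
    (hc : ∀ M N : ℕ, M ≤ N →
      κ ≤ ∏ j ∈ Finset.Icc M N, c j ∧ ∏ j ∈ Finset.Icc M N, c j ≤ 1 / κ) :
    κ ≤ 1 := by
  obtain ⟨h1, h2⟩ := hc 0 0 le_rfl
  have : κ ≤ 1 / κ := h1.trans h2
  have h3 : κ * κ ≤ 1 := (le_div_iff₀ hκ).mp this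
  nlinarith

lemma prod_Ico_bounds {c : ℕ → ℝ} {κ : ℝ} (hκ : 0 < κ)
    (hc : ∀ M N : ℕ, M ≤ N →
      κ ≤ ∏ j ∈ Finset.Icc M N, c j ∧ ∏ j ∈ Finset.Icc M N, c j ≤ 1 / κ)
    (i k : ℕ) :
    κ ≤ ∏ j ∈ Finset.Ico i k, c j ∧ ∏ j ∈ Finset.Ico i k, c j ≤ 1 / κ := by
  rcases le_or_gt k i with h | h
  · rw [Finset.Ico_eq_empty (by omega), Finset.prod_empty]
    have h1 := kappa_le_one hκ hc
    constructor
    · exact h1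
    · rw [le_div_iff₀ hκ]; nlinarith
  · have : Finset.Ico i k = Finset.Icc i (k-1) := by
      rw [← Finset.Ico_add_one_right_eq_Icc]
      congr 1
      omega
    rw [this]
    exact hc i (k-1) (by omega)

lemma T3_pointwise {a' b c : ℕ → ℝ} {κ : ℝ}
    (ha' : ∀ i, 0 < a' i) (hb : ∀ i, 0 < b i)
    (ht : Summable fun i => a' i / (b i)^2) (hκ : 0 < κ)
    (hc : ∀ M N : ℕ, M ≤ N →
      κ ≤ ∏ j ∈ Finset.Icc M N, c j ∧ ∏ j ∈ Finset.Icc M N, c j ≤ 1 / κ)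
    (g : ℕ → ℂ) (hg : Summable fun i => ‖g i‖^2 / a' i) (k : ℕ) :
    ‖T3fun b c g k‖^2
      ≤ (1/κ^2 * ∑' i, a' i / (b i)^2) * ∑' i, ‖g i‖^2 / a' i := by
  set w : ℕ → ℝ := fun i => (1 / b i) * ∏ j ∈ Finset.Ico i k, c j with hw
  have hw0 : ∀ i, 0 ≤ w i := fun i =>
    mul_nonneg (one_div_nonneg.2 (hb i).le) (hκ.le.trans (prod_Ico_bounds hκ hc i k).1)
  have hterm : ∀ i, (1 / (b i : ℂ)) * (∏ j ∈ Finset.Ico i k, (c j : ℂ)) * g i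
      = (w i : ℂ) * g i := by
    intro i
    rw [hw]
    push_cast
    ring
  have step1 : ‖T3fun b c g k‖ ≤ ∑ i ∈ Finset.range (k+1), w i * ‖g i‖ := by
    rw [T3fun]
    refine (norm_sum_le _ _).trans (le_of_eq (Finset.sum_congr rfl fun i _ => ?_))
    rw [hterm i, norm_mul, Complex.norm_real, Real.norm_eq_abs, abs_of_nonneg (hw0 i)]
  have step2 : (∑ i ∈ Finset.range (k+1), w i * ‖g i‖)^2
      ≤ (∑ i ∈ Finset.range (k+1), (w i * Real.sqrt (a' i))^2)
        * ∑ i ∈ Finset.range (k+1), (‖g i‖ / Real.sqrt (a' i))^2 := by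
    have := sum_mul_sq_le_sq_mul_sq (Finset.range (k+1))
      (fun i => w i * Real.sqrt (a' i)) (fun i => ‖g i‖ / Real.sqrt (a' i))
    refine le_trans (le_of_eq ?_) this
    congr 1
    apply Finset.sum_congr rfl
    intro i _
    have hsq : Real.sqrt (a' i) ≠ 0 := by
      have := ha' i; positivity
    field_simp
  have step3 : (∑ i ∈ Finset.range (k+1), (w i * Real.sqrt (a' i))^2)
      ≤ 1/κ^2 * ∑' i, a' i / (b i)^2 := by
    have hpt : ∀ i, (w i * Real.sqrt (a' i))^2 ≤ 1/κ^2 * (a' i / (b i)^2) := by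
      intro i
      have hprod := prod_Ico_bounds hκ hc i k
      have h2 : (∏ j ∈ Finset.Ico i k, c j)^2 ≤ (1/κ)^2 :=
        pow_le_pow_left₀ (hκ.le.trans hprod.1) hprod.2 2
      have hb' := hb i
      have ha'' := ha' i
      rw [mul_pow, Real.sq_sqrt ha''.le, hw]
      calc ((1 / b i) * ∏ j ∈ Finset.Ico i k, c j)^2 * a' i
          = (1 / b i)^2 * (∏ j ∈ Finset.Ico i k, c j)^2 * a' i := by ring
        _ ≤ (1 / b i)^2 * (1/κ)^2 * a' i :=
            mul_le_mul_of_nonneg_right (mul_le_mul_of_nonneg_left h2 (sq_nonneg _)) ha''.le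
        _ = 1/κ^2 * (a' i / (b i)^2) := by
            field_simp
    calc ∑ i ∈ Finset.range (k+1), (w i * Real.sqrt (a' i))^2
        ≤ ∑ i ∈ Finset.range (k+1), 1/κ^2 * (a' i / (b i)^2) :=
          Finset.sum_le_sum fun i _ => hpt i
      _ = 1/κ^2 * ∑ i ∈ Finset.range (k+1), a' i / (b i)^2 := by
          rw [Finset.mul_sum]
      _ ≤ 1/κ^2 * ∑' i, a' i / (b i)^2 := by
          refine mul_le_mul_of_nonneg_left ?_ (by positivity)
          exact Summable.sum_le_tsum _ (fun i _ => by
            have := ha' i; have := hb i; positivity) ht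
  have step4 : (∑ i ∈ Finset.range (k+1), (‖g i‖ / Real.sqrt (a' i))^2)
      ≤ ∑' i, ‖g i‖^2 / a' i := by
    have hpt : ∀ i, (‖g i‖ / Real.sqrt (a' i))^2 = ‖g i‖^2 / a' i := by
      intro i
      rw [div_pow, Real.sq_sqrt (ha' i).le]
    rw [Finset.sum_congr rfl fun i _ => hpt i]
    exact Summable.sum_le_tsum _ (fun i _ => div_nonneg (sq_nonneg _) (ha' i).le) hg
  have hnn : (0:ℝ) ≤ ∑ i ∈ Finset.range (k+1), w i * ‖g i‖ :=
    Finset.sum_nonneg fun i _ => mul_nonneg (hw0 i) (norm_nonneg _)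
  calc ‖T3fun b c g k‖^2 ≤ (∑ i ∈ Finset.range (k+1), w i * ‖g i‖)^2 :=
        pow_le_pow_left₀ (norm_nonneg _) step1 2
    _ ≤ (∑ i ∈ Finset.range (k+1), (w i * Real.sqrt (a' i))^2)
        * ∑ i ∈ Finset.range (k+1), (‖g i‖ / Real.sqrt (a' i))^2 := step2
    _ ≤ (1/κ^2 * ∑' i, a' i / (b i)^2) * ∑' i, ‖g i‖^2 / a' i := by
        exact mul_le_mul step3 step4 (Finset.sum_nonneg fun i _ => sq_nonneg _)
          (mul_nonneg (by positivity)
            (tsum_nonneg fun i => div_nonneg (ha' i).le (sq_nonneg _)))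

noncomputable def T3tail (b c : ℕ → ℝ) (N : ℕ) (g : ℕ → ℂ) (n : ℕ) : ℂ :=
  if n < N then 0 else T3fun b c g n

section Tail

variable {a a' b c : ℕ → ℝ} {κ : ℝ}

lemma T3_tail_pt (ha : ∀ k, 0 < a k) (ha' : ∀ i, 0 < a' i) (hb : ∀ i, 0 < b i)
  (ht : Summable fun i => a' i / (b i)^2) (hκ : 0 < κ)
  (hc : ∀ M N : ℕ, M ≤ N →
    κ ≤ ∏ j ∈ Finset.Icc M N, c j ∧ ∏ j ∈ Finset.Icc M N, c j ≤ 1 / κ)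
  (g : ℕ → ℂ) (hg : Summable fun i => ‖g i‖^2 / a' i) (N : ℕ) (n : ℕ) :
    ‖T3tail b c N g n‖^2 / a n
      ≤ ((1/κ^2 * ∑' i, a' i / (b i)^2) * ∑' i, ‖g i‖^2 / a' i) * (1 / a n) := by
  rw [T3tail]
  split_ifs with h
  · simp only [norm_zero]
    rw [zero_pow (by norm_num), zero_div]
    have h1 : (0:ℝ) ≤ 1/κ^2 * ∑' i, a' i / (b i)^2 :=
      mul_nonneg (by positivity) (tsum_nonneg fun i => div_nonneg (ha' i).le (sq_nonneg _))
    have h2 : (0:ℝ) ≤ ∑' i, ‖g i‖^2 / a' i :=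
      tsum_nonneg fun i => div_nonneg (sq_nonneg _) (ha' i).le
    have h3 : (0:ℝ) ≤ 1 / a n := one_div_nonneg.2 (ha n).le
    positivity
  · rw [div_eq_mul_one_div]
    exact mul_le_mul_of_nonneg_right (T3_pointwise ha' hb ht hκ hc g hg n)
      (one_div_nonneg.2 (ha n).le)

lemma T3_tail_summable (ha : ∀ k, 0 < a k) (ha' : ∀ i, 0 < a' i) (hb : ∀ i, 0 < b i)
  (hs : Summable fun k => 1 / a k)
  (ht : Summable fun i => a' i / (b i)^2) (hκ : 0 < κ)
  (hc : ∀ M N : ℕ, M ≤ N →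
    κ ≤ ∏ j ∈ Finset.Icc M N, c j ∧ ∏ j ∈ Finset.Icc M N, c j ≤ 1 / κ)
  (g : ℕ → ℂ) (hg : Summable fun i => ‖g i‖^2 / a' i) (N : ℕ) :
    Summable fun n => ‖T3tail b c N g n‖^2 / a n := by
  refine Summable.of_nonneg_of_le (fun n => div_nonneg (sq_nonneg _) (ha n).le)
    (fun n => T3_tail_pt ha ha' hb ht hκ hc g hg N n) (hs.mul_left _)

lemma T3_tail_tsum_le (ha : ∀ k, 0 < a k) (ha' : ∀ i, 0 < a' i) (hb : ∀ i, 0 < b i)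
  (hs : Summable fun k => 1 / a k)
  (ht : Summable fun i => a' i / (b i)^2) (hκ : 0 < κ)
  (hc : ∀ M N : ℕ, M ≤ N →
    κ ≤ ∏ j ∈ Finset.Icc M N, c j ∧ ∏ j ∈ Finset.Icc M N, c j ≤ 1 / κ)
  (g : ℕ → ℂ) (hg : Summable fun i => ‖g i‖^2 / a' i) (N : ℕ) :
    ∑' n, ‖T3tail b c N g n‖^2 / a n
      ≤ ((1/κ^2 * ∑' i, a' i / (b i)^2) * ∑' i, ‖g i‖^2 / a' i)
        * ∑' m, 1 / a (m + N) := by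
  have hsum := T3_tail_summable ha ha' hb hs ht hκ hc g hg N
  have hzero : ∑ n ∈ Finset.range N, ‖T3tail b c N g n‖^2 / a n = 0 := by
    apply Finset.sum_eq_zero
    intro n hn
    rw [Finset.mem_range] at hn
    simp [T3tail, hn, zero_pow]
  have hsplit := Summable.sum_add_tsum_nat_add N hsum
  have hshift : ∑' m, ‖T3tail b c N g (m + N)‖^2 / a (m + N)
      ≤ ((1/κ^2 * ∑' i, a' i / (b i)^2) * ∑' i, ‖g i‖^2 / a' i) * ∑' m, 1 / a (m + N) := by
    rw [← tsum_mul_left]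
    refine Summable.tsum_le_tsum (fun m => T3_tail_pt ha ha' hb ht hκ hc g hg N (m + N))
      ((summable_nat_add_iff N).mpr hsum)
      (((summable_nat_add_iff N).mpr hs).mul_left _)
  calc ∑' n, ‖T3tail b c N g n‖^2 / a n
      = ∑ n ∈ Finset.range N, ‖T3tail b c N g n‖^2 / a n
        + ∑' m, ‖T3tail b c N g (m + N)‖^2 / a (m + N) := hsplit.symm
    _ = ∑' m, ‖T3tail b c N g (m + N)‖^2 / a (m + N) := by rw [hzero, zero_add]
    _ ≤ _ := hshift

end Tail

lemma rankOne_compact {E F : Type*} [NormedAddCommGroup E] [NormedSpace ℂ E]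
    [NormedAddCommGroup F] [NormedSpace ℂ F] (φ : E →L[ℂ] ℂ) (v : F) :
    IsCompactOperator (φ.smulRight v) := by
  rw [isCompactOperator_iff_exists_mem_nhds_image_subset_compact]
  refine ⟨Metric.ball 0 1, Metric.ball_mem_nhds 0 one_pos,
    (fun z : ℂ => z • v) '' Metric.closedBall 0 ‖φ‖,
    (isCompact_closedBall 0 ‖φ‖).image (continuous_id.smul continuous_const), ?_⟩
  rintro y ⟨x, hx, rfl⟩
  refine ⟨φ x, ?_, (ContinuousLinearMap.smulRight_apply).symm⟩
  rw [Metric.mem_closedBall, dist_zero_right]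
  have hx1 : ‖x‖ ≤ 1 := by
    rw [Metric.mem_ball, dist_zero_right] at hx
    exact hx.le
  exact (φ.le_opNorm x).trans (mul_le_of_le_one_right (norm_nonneg φ) hx1)

lemma T3fun_add (b c : ℕ → ℝ) (u v : ℕ → ℂ) :
    T3fun b c (u + v) = T3fun b c u + T3fun b c v := by
  funext k
  simp only [T3fun, Pi.add_apply, mul_add, Finset.sum_add_distrib]

lemma T3fun_smul (b c : ℕ → ℝ) (z : ℂ) (u : ℕ → ℂ) :
    T3fun b c (z • u) = z • T3fun b c u := by
  funext k
  simp only [T3fun, Pi.smul_apply, smul_eq_mul, Finset.mul_sum]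
  exact Finset.sum_congr rfl fun i _ => by ring

end Aux

set_option maxHeartbeats 1000000 in
/-- the operator `T₃ : g ↦ (k ↦ ∑_{i=0}^k (1/b(i))(∏_{j=i}^{k-1}c(j))g(i))`
is a bounded operator from `ℓ²_{a′}` to `ℓ²_a` of norm at most `√(s·t)/κ`, and it is
a compact operator. -/
theorem jacobi_T3_bounded_compact (a a' b c : ℕ → ℝ) (κ : ℝ)
    (ha : ∀ k, 0 < a k) (ha' : ∀ i, 0 < a' i) (hb : ∀ i, 0 < b i)
    (hs : Summable fun k => 1 / a k)
    (ht : Summable fun i => a' i / (b i)^2)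
    (hκ : 0 < κ)
    (hc : ∀ M N : ℕ, M ≤ N →
      κ ≤ ∏ j ∈ Finset.Icc M N, c j ∧ ∏ j ∈ Finset.Icc M N, c j ≤ 1 / κ) :
    ∃ T : Lp ℂ 2 (wSeqMeasure a') →L[ℂ] Lp ℂ 2 (wSeqMeasure a),
      (∀ g : Lp ℂ 2 (wSeqMeasure a'),
        ⇑(T g) =ᵐ[wSeqMeasure a] fun k => ∑ i ∈ Finset.range (k+1),
          (1 / (b i : ℂ)) * (∏ j ∈ Finset.Ico i k, (c j : ℂ)) * g i) ∧
      ‖T‖ ≤ Real.sqrt ((∑' k, 1 / a k) * (∑' i, a' i / (b i)^2)) / κ ∧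
      IsCompactOperator T := by
  have hs0 : (0:ℝ) ≤ ∑' k, 1 / a k := tsum_nonneg fun k => one_div_nonneg.2 (ha k).le
  have ht0 : (0:ℝ) ≤ ∑' i, a' i / (b i)^2 :=
    tsum_nonneg fun i => div_nonneg (ha' i).le (sq_nonneg _)
  have ceq : ∀ {u v : ℕ → ℂ}, u =ᵐ[wSeqMeasure a] v → u = v := fun h => funext (wseq_ae ha h)
  have ceq' : ∀ {u v : ℕ → ℂ}, u =ᵐ[wSeqMeasure a'] v → u = v := fun h => funext (wseq_ae ha' h)
  have lpext : ∀ {u v : Lp ℂ 2 (wSeqMeasure a)}, (⇑u : ℕ → ℂ) = ⇑v → u = v :=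
    fun h => Lp.ext (by rw [h])
  have ctoLp : ∀ (f : ℕ → ℂ) (hf : MemLp f 2 (wSeqMeasure a)), ⇑(hf.toLp f) = f :=
    fun f hf => ceq (MemLp.coeFn_toLp hf)
  have cadd : ∀ u v : Lp ℂ 2 (wSeqMeasure a), ⇑(u + v) = ⇑u + ⇑v :=
    fun u v => ceq (Lp.coeFn_add u v)
  have csub : ∀ u v : Lp ℂ 2 (wSeqMeasure a), ⇑(u - v) = ⇑u - ⇑v :=
    fun u v => ceq (Lp.coeFn_sub u v)
  have csmul : ∀ (z : ℂ) (v : Lp ℂ 2 (wSeqMeasure a)), ⇑(z • v) = z • ⇑v :=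
    fun z v => ceq (Lp.coeFn_smul z v)
  have cadd' : ∀ u v : Lp ℂ 2 (wSeqMeasure a'), (⇑(u + v) : ℕ → ℂ) = ⇑u + ⇑v :=
    fun u v => ceq' (Lp.coeFn_add u v)
  have csmul' : ∀ (z : ℂ) (v : Lp ℂ 2 (wSeqMeasure a')), (⇑(z • v) : ℕ → ℂ) = z • ⇑v :=
    fun z v => ceq' (Lp.coeFn_smul z v)
  have hgsum : ∀ g : Lp ℂ 2 (wSeqMeasure a'), Summable fun i => ‖g i‖^2 / a' i :=
    fun g => wseq_summable a' ha' g
  have hgnorm : ∀ g : Lp ℂ 2 (wSeqMeasure a'), (∑' i, ‖g i‖^2 / a' i) = ‖g‖^2 :=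
    fun g => wseq_norm_eq a' ha' g
  have htails : ∀ (g : Lp ℂ 2 (wSeqMeasure a')) (N : ℕ),
      Summable fun n => ‖T3tail b c N (⇑g) n‖^2 / a n :=
    fun g N => T3_tail_summable ha ha' hb hs ht hκ hc _ (hgsum g) N
  have h00 : ∀ u : ℕ → ℂ, T3tail b c 0 u = T3fun b c u := fun u => funext fun n => by
    simp [T3tail]
  have hT3sum : ∀ g : Lp ℂ 2 (wSeqMeasure a'),
      Summable fun n => ‖T3fun b c (⇑g) n‖^2 / a n :=
    fun g => by have := htails g 0; rwa [h00] at this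
  have hmem : ∀ g : Lp ℂ 2 (wSeqMeasure a'), MemLp (T3fun b c ⇑g) 2 (wSeqMeasure a) :=
    fun g => wseq_memℒp a ha _ (hT3sum g)
  have hmemtail : ∀ (g : Lp ℂ 2 (wSeqMeasure a')) (N : ℕ),
      MemLp (T3tail b c N ⇑g) 2 (wSeqMeasure a) :=
    fun g N => wseq_memℒp a ha _ (htails g N)
  have htailb : ∀ (g : Lp ℂ 2 (wSeqMeasure a')) (N : ℕ),
      ∑' n, ‖T3tail b c N (⇑g) n‖^2 / a n
        ≤ (1/κ^2 * ∑' i, a' i / (b i)^2) * ‖g‖^2 * ∑' m, 1 / a (m + N) := by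
    intro g N
    have h := T3_tail_tsum_le ha ha' hb hs ht hκ hc _ (hgsum g) N
    rwa [hgnorm g] at h
  have key : ∀ (u : ℕ → ℂ) (hus : Summable fun n => ‖u n‖^2 / a n)
      (hu : MemLp u 2 (wSeqMeasure a)) (C : ℝ), 0 ≤ C →
      (∑' n, ‖u n‖^2 / a n) ≤ C^2 → ‖hu.toLp u‖ ≤ C := by
    intro u hus hu C hC hle
    have h1 : hu.toLp u = (wseq_memℒp a ha u hus).toLp u := rfl
    rw [h1, wseq_norm_toLp a ha u hus]
    calc Real.sqrt (∑' n, ‖u n‖^2 / a n) ≤ Real.sqrt (C^2) := Real.sqrt_le_sqrt hle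
      _ = C := Real.sqrt_sq hC
  -- the continuous linear map
  set Tlin : Lp ℂ 2 (wSeqMeasure a') →ₗ[ℂ] Lp ℂ 2 (wSeqMeasure a) :=
    { toFun := fun g => (hmem g).toLp (T3fun b c ⇑g),
      map_add' := fun g g' => lpext (by
        rw [ctoLp, cadd, ctoLp, ctoLp, cadd' g g', T3fun_add]),
      map_smul' := fun z g => lpext (by
        rw [ctoLp, RingHom.id_apply, csmul, ctoLp, csmul' z g, T3fun_smul]) } with hTlin
  set bnd : ℝ := Real.sqrt ((∑' k, 1 / a k) * (∑' i, a' i / (b i)^2)) / κ with hbnd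
  have hbnd0 : 0 ≤ bnd := div_nonneg (Real.sqrt_nonneg _) hκ.le
  have hTlinb : ∀ g : Lp ℂ 2 (wSeqMeasure a'), ‖Tlin g‖ ≤ bnd * ‖g‖ := by
    intro g
    show ‖(hmem g).toLp (T3fun b c ⇑g)‖ ≤ bnd * ‖g‖
    refine key _ (hT3sum g) (hmem g) _ (mul_nonneg hbnd0 (norm_nonneg _)) ?_
    have h := htailb g 0
    rw [h00 (⇑g)] at h
    simp only [Nat.add_zero] at h
    refine h.trans (le_of_eq ?_)
    rw [hbnd, mul_pow, div_pow, Real.sq_sqrt (mul_nonneg hs0 ht0)]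
    ring
  set T : Lp ℂ 2 (wSeqMeasure a') →L[ℂ] Lp ℂ 2 (wSeqMeasure a) :=
    Tlin.mkContinuous bnd hTlinb with hT
  have hTapp : ∀ g : Lp ℂ 2 (wSeqMeasure a'), T g = (hmem g).toLp (T3fun b c ⇑g) :=
    fun g => rfl
  refine ⟨T, ?_, ?_, ?_⟩
  · intro g
    rw [hTapp g]
    exact MemLp.coeFn_toLp (hmem g)
  · exact LinearMap.mkContinuous_norm_le _ hbnd0 _
  -- compactness
  · -- the functionals
    have hΦb : ∀ (k : ℕ) (g : Lp ℂ 2 (wSeqMeasure a')),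
        ‖T3fun b c (⇑g) k‖ ≤ Real.sqrt (1/κ^2 * ∑' i, a' i / (b i)^2) * ‖g‖ := by
      intro k g
      have hp := T3_pointwise ha' hb ht hκ hc (⇑g) (hgsum g) k
      rw [hgnorm g] at hp
      have hB0 : (0:ℝ) ≤ 1/κ^2 * ∑' i, a' i / (b i)^2 := mul_nonneg (by positivity) ht0
      calc ‖T3fun b c (⇑g) k‖ = Real.sqrt (‖T3fun b c (⇑g) k‖^2) :=
            (Real.sqrt_sq (norm_nonneg _)).symm
        _ ≤ Real.sqrt ((1/κ^2 * ∑' i, a' i / (b i)^2) * ‖g‖^2) := Real.sqrt_le_sqrt hp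
        _ = Real.sqrt (1/κ^2 * ∑' i, a' i / (b i)^2) * ‖g‖ := by
            rw [Real.sqrt_mul hB0, Real.sqrt_sq (norm_nonneg _)]
    set Φ : ℕ → (Lp ℂ 2 (wSeqMeasure a') →L[ℂ] ℂ) := fun k => LinearMap.mkContinuous
      { toFun := fun g => T3fun b c (⇑g) k,
        map_add' := fun g g' => by
          show T3fun b c (⇑(g + g')) k = T3fun b c (⇑g) k + T3fun b c (⇑g') k
          rw [cadd' g g', T3fun_add]; rfl,
        map_smul' := fun z g => by
          show T3fun b c (⇑(z • g)) k = z • T3fun b c (⇑g) k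
          rw [csmul' z g, T3fun_smul]; rfl }
      (Real.sqrt (1/κ^2 * ∑' i, a' i / (b i)^2)) (fun g => hΦb k g) with hΦ
    have hΦapp : ∀ (k : ℕ) (g : Lp ℂ 2 (wSeqMeasure a')), Φ k g = T3fun b c (⇑g) k :=
      fun k g => rfl
    have hδ : ∀ k : ℕ, Summable fun n => ‖(fun m => if m = k then (1:ℂ) else 0) n‖^2 / a n := by
      intro k
      refine summable_of_ne_finset_zero (s := {k}) (fun n hn => ?_)
      rw [Finset.mem_singleton] at hn
      simp [hn]
    set eVec : ℕ → Lp ℂ 2 (wSeqMeasure a) := fun k =>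
      (wseq_memℒp a ha _ (hδ k)).toLp (fun m => if m = k then (1:ℂ) else 0) with heVec
    have hceVec : ∀ k, ⇑(eVec k) = (fun m => if m = k then (1:ℂ) else 0) :=
      fun k => ctoLp _ _
    set SN : ℕ → (Lp ℂ 2 (wSeqMeasure a') →L[ℂ] Lp ℂ 2 (wSeqMeasure a)) := fun N =>
      ∑ k ∈ Finset.range N, (Φ k).smulRight (eVec k) with hSN
    have hSNcompact : ∀ N, IsCompactOperator (SN N) := by
      intro N
      show IsCompactOperator ⇑(∑ k ∈ Finset.range N, (Φ k).smulRight (eVec k))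
      rw [ContinuousLinearMap.coe_sum']
      exact Finset.sum_induction _ IsCompactOperator (fun x y hx hy => hx.add hy)
        isCompactOperator_zero (fun k _ => rankOne_compact (Φ k) (eVec k))
    have hcoesum : ∀ (s : Finset ℕ) (v : ℕ → Lp ℂ 2 (wSeqMeasure a)),
        ⇑(∑ k ∈ s, v k) = ∑ k ∈ s, (⇑(v k) : ℕ → ℂ) := by
      intro s v
      induction s using Finset.cons_induction with
      | empty => simp only [Finset.sum_empty]; exact ceq (Lp.coeFn_zero ℂ 2 _)
      | cons k s hk ih => simp only [Finset.sum_cons]; rw [cadd, ih]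
    have hdiff : ∀ (N : ℕ) (g : Lp ℂ 2 (wSeqMeasure a')),
        T g - SN N g = (hmemtail g N).toLp (T3tail b c N ⇑g) := by
      intro N g
      apply lpext
      rw [ctoLp, csub, hTapp g, ctoLp]
      have hsn : ⇑(SN N g) = fun n => if n < N then T3fun b c (⇑g) n else 0 := by
        have s1 : SN N g = ∑ k ∈ Finset.range N, (Φ k g) • eVec k := by
          rw [hSN, ContinuousLinearMap.sum_apply]
          exact Finset.sum_congr rfl fun k _ => ContinuousLinearMap.smulRight_apply
        rw [s1, hcoesum]
        funext n
        rw [Finset.sum_apply]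
        have : ∀ k, (⇑(Φ k g • eVec k) : ℕ → ℂ) n = if n = k then Φ k g else 0 := by
          intro k
          rw [csmul, Pi.smul_apply, hceVec k, smul_eq_mul, mul_ite, mul_one, mul_zero]
        rw [Finset.sum_congr rfl fun k _ => this k, Finset.sum_ite_eq]
        simp only [Finset.mem_range]
        split_ifs with h
        · rw [hΦapp]
        · rfl
      rw [hsn]
      funext n
      simp only [Pi.sub_apply, T3tail]
      split_ifs with h
      · exact sub_self _
      · exact sub_zero _
    have hdn : ∀ (N : ℕ) (g : Lp ℂ 2 (wSeqMeasure a')),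
        ‖T g - SN N g‖
          ≤ Real.sqrt ((∑' i, a' i / (b i)^2) * ∑' m, 1 / a (m + N)) / κ * ‖g‖ := by
      intro N g
      have hε0 : (0:ℝ) ≤ ∑' m, 1 / a (m + N) :=
        tsum_nonneg fun m => one_div_nonneg.2 (ha _).le
      rw [hdiff N g]
      refine key _ (htails g N) (hmemtail g N) _
        (mul_nonneg (div_nonneg (Real.sqrt_nonneg _) hκ.le) (norm_nonneg _)) ?_
      refine (htailb g N).trans (le_of_eq ?_)
      rw [mul_pow, div_pow, Real.sq_sqrt (mul_nonneg ht0 hε0)]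
      ring
    have hop : ∀ N : ℕ, ‖T - SN N‖
        ≤ Real.sqrt ((∑' i, a' i / (b i)^2) * ∑' m, 1 / a (m + N)) / κ := by
      intro N
      refine ContinuousLinearMap.opNorm_le_bound _
        (div_nonneg (Real.sqrt_nonneg _) hκ.le) (fun g => ?_)
      rw [ContinuousLinearMap.sub_apply]
      exact hdn N g
    have hε : Filter.Tendsto (fun N => ∑' m, 1 / a (m + N)) Filter.atTop (nhds 0) := by
      have hεeq : ∀ N : ℕ, (∑' m, 1 / a (m + N))
          = (∑' k, 1 / a k) - ∑ i ∈ Finset.range N, 1 / a i := by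
        intro N
        have h := Summable.sum_add_tsum_nat_add (f := fun k => 1 / a k) N hs
        linarith
      simp only [hεeq]
      have h1 := hs.hasSum.tendsto_sum_nat
      have h2 := Filter.Tendsto.sub (tendsto_const_nhds (x := ∑' k, 1 / a k)) h1
      simpa using h2
    have hβ0 : Filter.Tendsto
        (fun N => Real.sqrt ((∑' i, a' i / (b i)^2) * ∑' m, 1 / a (m + N)) / κ)
        Filter.atTop (nhds 0) := by
      have hcont : Continuous fun x : ℝ => Real.sqrt ((∑' i, a' i / (b i)^2) * x) / κ :=
        (Real.continuous_sqrt.comp (continuous_const.mul continuous_id)).div_const κ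
      have h := (hcont.tendsto 0).comp hε
      simp only [Function.comp_def, mul_zero, Real.sqrt_zero, zero_div] at h
      exact h
    have hTop : Filter.Tendsto SN Filter.atTop (nhds T) := by
      rw [tendsto_iff_norm_sub_tendsto_zero]
      refine squeeze_zero (fun N => norm_nonneg _) (fun N => ?_) hβ0
      rw [norm_sub_rev]
      exact hop N
    exact isCompactOperator_of_tendsto hTop (Filter.Eventually.of_forall hSNcompact)
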